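/- Let Λ be a lattice of signature (3,19), κ ∈ Λ ⊗ ℝ with κ² > 0, and let x₁, x₂ ∈ Λ ⊗ ℝ be vectors with x₁² > 0, x₂² > 0 such that κ, x₁, x₂ are pairwise orthogonal. Then there exists ε > 0 such that every δ ∈ Λ with δ² = -2, ⟨δ,κ⟩ = 0, |⟨δ,x₁⟩| < ε‖δ‖, and |⟨δ,x₂⟩| < ε‖δ‖ satisfies ‖δ‖ ≤ 1/ε. Equivalently, there is no sequence δᵢ ∈ Λ with δᵢ² = -2, ‖δᵢ‖ → ∞, and ⟨δᵢ,κ⟩, ⟨δᵢ,x₁⟩, ⟨δᵢ,x₂⟩ → 0. -/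

import Mathlib

set_option maxHeartbeats 1000000

lemma bilin_sum {V : Type*} [AddCommGroup V] [Module ℝ V] {ι : Type*} [Fintype ι]
    (B : V →ₗ[ℝ] V →ₗ[ℝ] ℝ) (t : ι → ℝ) (u : ι → V) :
    B (∑ j, t j • u j) (∑ k, t k • u k) = ∑ j, ∑ k, t j * (t k * B (u j) (u k)) := by
  simp [map_sum, map_smul, LinearMap.sum_apply, LinearMap.smul_apply, smul_eq_mul,
    Finset.mul_sum]
  rw [Finset.sum_comm]
  exact Finset.sum_congr rfl fun j _ => Finset.sum_congr rfl fun k _ => by ring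


lemma aux_neg (V : Type*) [NormedAddCommGroup V] [NormedSpace ℝ V]
    (b : Module.Basis (Fin 22) ℝ V) (B : V →ₗ[ℝ] V →ₗ[ℝ] ℝ)
    (hsymm : ∀ x y, B x y = B y x)
    (hsig : ∃ c : Module.Basis (Fin 22) ℝ V, ∀ i j, B (c i) (c j) =
      if i = j then (if (i : ℕ) < 3 then 1 else -1) else 0)
    (κ x₁ x₂ : V) (hκ : 0 < B κ κ) (hx₁ : 0 < B x₁ x₁) (hx₂ : 0 < B x₂ x₂)
    (h12 : B x₁ x₂ = 0) (hκ1 : B κ x₁ = 0) (hκ2 : B κ x₂ = 0)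
    (w : V) (hwκ : B w κ = 0) (hw1 : B w x₁ = 0) (hw2 : B w x₂ = 0) (hw0 : w ≠ 0) :
    B w w < 0 := by
  haveI : FiniteDimensional ℝ V := Module.Finite.of_basis b
  by_contra hcon
  push_neg at hcon  -- 0 ≤ B w w
  obtain ⟨c, hc⟩ := hsig
  set v : Fin 4 → V := ![κ, x₁, x₂, w] with hv
  have hκw : B κ w = 0 := by rw [hsymm]; exact hwκ
  have h1w : B x₁ w = 0 := by rw [hsymm]; exact hw1
  have h2w : B x₂ w = 0 := by rw [hsymm]; exact hw2
  have h21 : B x₂ x₁ = 0 := by rw [hsymm]; exact h12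
  have h1κ : B x₁ κ = 0 := by rw [hsymm]; exact hκ1
  have h2κ : B x₂ κ = 0 := by rw [hsymm]; exact hκ2
  have hli : LinearIndependent ℝ v := by
    rw [Fintype.linearIndependent_iff]
    intro g hg
    have e0 : B (∑ i, g i • v i) κ = 0 := by rw [hg]; simp
    have e1 : B (∑ i, g i • v i) x₁ = 0 := by rw [hg]; simp
    have e2 : B (∑ i, g i • v i) x₂ = 0 := by rw [hg]; simp
    have e3 : ∑ i, g i • v i = 0 := hg
    simp only [Fin.sum_univ_four, hv, map_add, map_smul, LinearMap.add_apply,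
      LinearMap.smul_apply, smul_eq_mul, Matrix.cons_val_zero, Matrix.cons_val_one,
      Matrix.head_cons, Matrix.cons_val_two, Matrix.tail_cons, Matrix.cons_val_three] at e0 e1 e2 e3
    simp only [hκ1, hκ2, hκw, h1κ, h21, h1w, h2κ, h12, h2w, hwκ, hw1, hw2,
      mul_zero, add_zero, zero_add] at e0 e1 e2
    have hg0 : g 0 = 0 := by
      rcases mul_eq_zero.mp e0 with h | h
      · exact h
      · linarith
    have hg1 : g 1 = 0 := by
      rcases mul_eq_zero.mp e1 with h | h
      · exact h
      · linarith
    have hg2 : g 2 = 0 := by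
      rcases mul_eq_zero.mp e2 with h | h
      · exact h
      · linarith
    have hg3 : g 3 = 0 := by
      rw [hg0, hg1, hg2] at e3
      simp at e3
      rcases e3 with h | h
      · exact h
      · exact absurd h hw0
    intro i; fin_cases i <;> assumption
  set emb : Fin 19 → Fin 22 := fun j => ⟨j.val + 3, by omega⟩ with hemb
  have hembinj : Function.Injective emb := by
    intro j k h
    simp only [hemb, Fin.mk.injEq] at h
    exact Fin.ext (by omega)
  have hliN : LinearIndependent ℝ (fun j : Fin 19 => c (emb j)) :=
    c.linearIndependent.comp emb hembinj
  set P := Submodule.span ℝ (Set.range v) with hP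
  set N := Submodule.span ℝ (Set.range (fun j : Fin 19 => c (emb j))) with hN
  have hdisj : P ⊓ N = ⊥ := by
    rw [Submodule.eq_bot_iff]
    intro x hx
    rw [Submodule.mem_inf] at hx
    obtain ⟨hxP, hxN⟩ := hx
    rw [hP, Submodule.mem_span_range_iff_exists_fun ℝ] at hxP
    rw [hN, Submodule.mem_span_range_iff_exists_fun ℝ] at hxN
    obtain ⟨g, hg⟩ := hxP
    obtain ⟨t, ht⟩ := hxN
    -- B x x from P side is ≥ 0
    have hxxP : 0 ≤ B x x := by
      rw [← hg, bilin_sum]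
      simp only [Fin.sum_univ_four, hv, Matrix.cons_val_zero, Matrix.cons_val_one,
        Matrix.head_cons, Matrix.cons_val_two, Matrix.tail_cons, Matrix.cons_val_three]
      simp only [hκ1, hκ2, hκw, h1κ, h21, h1w, h2κ, h12, h2w, hwκ, hw1, hw2]
      linarith [mul_nonneg (mul_self_nonneg (g 0)) hκ.le,
        mul_nonneg (mul_self_nonneg (g 1)) hx₁.le,
        mul_nonneg (mul_self_nonneg (g 2)) hx₂.le,
        mul_nonneg (mul_self_nonneg (g 3)) hcon]
    -- B x x from N side is - sum of squares
    have hxxN : B x x = -∑ j, (t j)^2 := by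
      rw [← ht, bilin_sum]
      have : ∀ j : Fin 19, ∑ k : Fin 19, t j * (t k * B (c (emb j)) (c (emb k))) = -(t j)^2 := by
        intro j
        have : ∀ k : Fin 19, t j * (t k * B (c (emb j)) (c (emb k)))
            = if k = j then -(t j)^2 else 0 := by
          intro k
          rw [hc]
          by_cases h : emb j = emb k
          · have hjk : j = k := hembinj h
            subst hjk
            rw [if_pos rfl, if_pos rfl, if_neg (by simp [hemb])]
            ring
          · rw [if_neg h, if_neg (by rintro rfl; exact h rfl)]
            ring
        rw [Finset.sum_congr rfl (fun k _ => this k), Finset.sum_ite_eq' Finset.univ j]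
        simp
      rw [Finset.sum_congr rfl (fun j _ => this j)]
      simp
    have hts : ∑ j, (t j)^2 = 0 := by
      have h1 : 0 ≤ ∑ j, (t j)^2 := Finset.sum_nonneg fun j _ => sq_nonneg _
      linarith [hxxP, hxxN, h1]
    have htz : ∀ j ∈ Finset.univ, (t j)^2 = 0 :=
      (Finset.sum_eq_zero_iff_of_nonneg (fun j _ => sq_nonneg _)).mp hts
    rw [← ht]
    apply Finset.sum_eq_zero
    intro j _
    have : t j = 0 := (pow_eq_zero_iff two_ne_zero).mp (htz j (Finset.mem_univ j))
    rw [this, zero_smul]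
  have hPfin : Module.finrank ℝ P = 4 := by
    rw [hP, finrank_span_eq_card hli]; simp
  have hNfin : Module.finrank ℝ N = 19 := by
    rw [hN, finrank_span_eq_card hliN]; simp
  have hVfin : Module.finrank ℝ V = 22 := by
    rw [Module.finrank_eq_card_basis b]; simp
  have := Submodule.finrank_sup_add_finrank_inf_eq P N
  rw [hdisj, hPfin, hNfin] at this
  have hle : Module.finrank ℝ ↥(P ⊔ N) ≤ 22 := hVfin ▸ Submodule.finrank_le (P ⊔ N)
  simp at this
  omega

lemma aux_quant (V : Type*) [NormedAddCommGroup V] [NormedSpace ℝ V]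
    (b : Module.Basis (Fin 22) ℝ V) (B : V →ₗ[ℝ] V →ₗ[ℝ] ℝ)
    (hsymm : ∀ x y, B x y = B y x)
    (hsig : ∃ c : Module.Basis (Fin 22) ℝ V, ∀ i j, B (c i) (c j) =
      if i = j then (if (i : ℕ) < 3 then 1 else -1) else 0)
    (κ x₁ x₂ : V) (hκ : 0 < B κ κ) (hx₁ : 0 < B x₁ x₁) (hx₂ : 0 < B x₂ x₂)
    (h12 : B x₁ x₂ = 0) (hκ1 : B κ x₁ = 0) (hκ2 : B κ x₂ = 0) :
    ∃ C : ℝ, 0 < C ∧ ∀ w : V, B w κ = 0 → B w x₁ = 0 → B w x₂ = 0 →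
      B w w ≤ -C * ‖w‖^2 := by
  haveI : FiniteDimensional ℝ V := Module.Finite.of_basis b
  have hneg := aux_neg V b B hsymm hsig κ x₁ x₂ hκ hx₁ hx₂ h12 hκ1 hκ2
  set S : Set V := {w | ‖w‖ = 1 ∧ B w κ = 0 ∧ B w x₁ = 0 ∧ B w x₂ = 0} with hS
  have hBcont : Continuous fun w : V => B w w := by
    have h1 : Continuous fun w : V =>
        (LinearMap.toContinuousLinearMap (B w) : V →L[ℝ] ℝ) :=
      (LinearMap.toContinuousLinearMap.toLinearMap ∘ₗ B).continuous_of_finiteDimensional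
    have h2 := h1.clm_apply continuous_id
    simpa using h2
  have hclosed : IsClosed S := by
    have : S = (fun w : V => ‖w‖) ⁻¹' {1} ∩ ((B.flip κ) ⁻¹' {0} ∩
        ((B.flip x₁) ⁻¹' {0} ∩ (B.flip x₂) ⁻¹' {0})) := by
      ext w
      simp [hS, LinearMap.flip_apply, and_assoc]
    rw [this]
    exact ((isClosed_singleton).preimage continuous_norm).inter
      (((isClosed_singleton).preimage (B.flip κ).continuous_of_finiteDimensional).inter
        (((isClosed_singleton).preimage (B.flip x₁).continuous_of_finiteDimensional).inter
          ((isClosed_singleton).preimage (B.flip x₂).continuous_of_finiteDimensional)))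
  have hScompact : IsCompact S := by
    apply IsCompact.of_isClosed_subset (isCompact_sphere (0 : V) 1) hclosed
    intro w hw
    rw [mem_sphere_zero_iff_norm]
    exact hw.1
  have hmemS : ∀ w : V, B w κ = 0 → B w x₁ = 0 → B w x₂ = 0 → w ≠ 0 →
      (‖w‖⁻¹ • w) ∈ S := by
    intro w hwκ hw1 hw2 hw0
    have hnorm : ‖w‖ ≠ 0 := norm_ne_zero_iff.mpr hw0
    refine ⟨?_, ?_, ?_, ?_⟩
    · rw [norm_smul, norm_inv, norm_norm]
      field_simp
    · simp [map_smul, hwκ]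
    · simp [map_smul, hw1]
    · simp [map_smul, hw2]
  by_cases hne : S.Nonempty
  · obtain ⟨w₀, hw₀S, hmax⟩ := hScompact.exists_isMaxOn hne hBcont.continuousOn
    have hw₀ne : w₀ ≠ 0 := by
      intro h
      have := hw₀S.1
      rw [h] at this
      simp at this
    have hw₀neg : B w₀ w₀ < 0 := hneg w₀ hw₀S.2.1 hw₀S.2.2.1 hw₀S.2.2.2 hw₀ne
    refine ⟨-(B w₀ w₀), by linarith, ?_⟩
    intro w hwκ hw1 hw2
    rcases eq_or_ne w 0 with rfl | hw0
    · simp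
    · have hpos : 0 < ‖w‖ := norm_pos_iff.mpr hw0
      have huS := hmemS w hwκ hw1 hw2 hw0
      have hle : B (‖w‖⁻¹ • w) (‖w‖⁻¹ • w) ≤ B w₀ w₀ := (isMaxOn_iff.mp hmax) _ huS
      have hval : B (‖w‖⁻¹ • w) (‖w‖⁻¹ • w) = ‖w‖⁻¹ * (‖w‖⁻¹ * B w w) := by
        simp [map_smul, smul_eq_mul]
      have key : B w w = ‖w‖^2 * B (‖w‖⁻¹ • w) (‖w‖⁻¹ • w) := by
        rw [hval]
        field_simp
      have h2 := mul_le_mul_of_nonneg_left hle (sq_nonneg ‖w‖)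
      linarith [key, h2]
  · refine ⟨1, one_pos, ?_⟩
    intro w hwκ hw1 hw2
    rcases eq_or_ne w 0 with rfl | hw0
    · simp
    · exact absurd ⟨_, hmemS w hwκ hw1 hw2 hw0⟩ hne
/-- Let `Λ` be an (even unimodular) lattice of signature (3,19) in `V = Λ ⊗ ℝ`,
`κ` of positive square, and `x₁, x₂` of positive square with `κ, x₁, x₂` pairwise
orthogonal.  Then there is `ε > 0` such that every `δ ∈ Λ` with `⟨δ,δ⟩ = -2`,
`⟨δ,κ⟩ = 0`, `|⟨δ,x₁⟩| < ε‖δ‖` and `|⟨δ,x₂⟩| < ε‖δ‖` satisfies `‖δ‖ ≤ 1/ε`. -/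
theorem stmt2 (V : Type*) [NormedAddCommGroup V] [NormedSpace ℝ V]
    (b : Module.Basis (Fin 22) ℝ V)
    (B : V →ₗ[ℝ] V →ₗ[ℝ] ℝ)
    (hsymm : ∀ x y, B x y = B y x)
    (hint : ∀ i j, ∃ n : ℤ, B (b i) (b j) = n)
    (heven : ∀ x ∈ Submodule.span ℤ (Set.range b), ∃ n : ℤ, B x x = 2 * n)
    (hunimod : ∃ G : Matrix (Fin 22) (Fin 22) ℤ,
      (∀ i j, (G i j : ℝ) = B (b i) (b j)) ∧ (G.det = 1 ∨ G.det = -1))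
    (hsig : ∃ c : Module.Basis (Fin 22) ℝ V, ∀ i j, B (c i) (c j) =
      if i = j then (if (i : ℕ) < 3 then 1 else -1) else 0)
    (κ x₁ x₂ : V) (hκ : 0 < B κ κ) (hx₁ : 0 < B x₁ x₁) (hx₂ : 0 < B x₂ x₂)
    (h12 : B x₁ x₂ = 0) (hκ1 : B κ x₁ = 0) (hκ2 : B κ x₂ = 0) :
    ∃ ε : ℝ, 0 < ε ∧ ∀ δ : V, δ ∈ Submodule.span ℤ (Set.range b) →
      B δ δ = -2 → B δ κ = 0 →
      |B δ x₁| < ε * ‖δ‖ → |B δ x₂| < ε * ‖δ‖ → ‖δ‖ ≤ 1 / ε := by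
  obtain ⟨C, hC, hquant⟩ := aux_quant V b B hsymm hsig κ x₁ x₂ hκ hx₁ hx₂ h12 hκ1 hκ2
  obtain ⟨K, hK⟩ : ∃ K : ℝ, K = 1 / B x₁ x₁ + 1 / B x₂ x₂ := ⟨_, rfl⟩
  obtain ⟨M, hM⟩ : ∃ M : ℝ, M = ‖x₁‖ / B x₁ x₁ + ‖x₂‖ / B x₂ x₂ := ⟨_, rfl⟩
  have hKpos : 0 < K := by rw [hK]; positivity
  have hMnn : 0 ≤ M := by rw [hM]; positivity
  obtain ⟨s, hs⟩ : ∃ s : ℝ, s = Real.sqrt C := ⟨_, rfl⟩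
  have hspos : 0 < s := hs ▸ Real.sqrt_pos.mpr hC
  have hssq : s ^ 2 = C := by rw [hs]; exact Real.sq_sqrt hC.le
  obtain ⟨ε, hεdef⟩ :
      ∃ ε : ℝ, ε = min (1 / (2 * (M + 1))) (min (Real.sqrt (C / (8 * (K + 1)))) (s / 4)) :=
    ⟨_, rfl⟩
  have hεpos : 0 < ε := by
    rw [hεdef]
    apply lt_min
    · positivity
    · exact lt_min (Real.sqrt_pos.mpr (by positivity)) (by positivity)
  refine ⟨ε, hεpos, ?_⟩
  intro δ _ hδδ hδκ h1 h2
  obtain ⟨r, hr⟩ : ∃ r : ℝ, r = ‖δ‖ := ⟨_, rfl⟩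
  rw [← hr] at h1 h2 ⊢
  have hrnn : 0 ≤ r := hr ▸ norm_nonneg δ
  obtain ⟨β₁, hβ₁⟩ : ∃ β : ℝ, β = B δ x₁ / B x₁ x₁ := ⟨_, rfl⟩
  obtain ⟨β₂, hβ₂⟩ : ∃ β : ℝ, β = B δ x₂ / B x₂ x₂ := ⟨_, rfl⟩
  obtain ⟨n, hn⟩ : ∃ n : V, n = δ - β₁ • x₁ - β₂ • x₂ := ⟨_, rfl⟩
  have e21 : B x₂ x₁ = 0 := by rw [hsymm]; exact h12
  have e1δ : B x₁ δ = B δ x₁ := hsymm _ _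
  have e2δ : B x₂ δ = B δ x₂ := hsymm _ _
  have e1κ : B x₁ κ = 0 := by rw [hsymm]; exact hκ1
  have e2κ : B x₂ κ = 0 := by rw [hsymm]; exact hκ2
  have hnκ : B n κ = 0 := by
    simp [hn, map_sub, map_smul, LinearMap.sub_apply, LinearMap.smul_apply, smul_eq_mul,
      hδκ, e1κ, e2κ]
  have hn1 : B n x₁ = 0 := by
    simp only [hn, map_sub, map_smul, LinearMap.sub_apply, LinearMap.smul_apply, smul_eq_mul,
      e21, mul_zero, sub_zero, hβ₁]
    field_simp
    ring
  have hn2 : B n x₂ = 0 := by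
    simp only [hn, map_sub, map_smul, LinearMap.sub_apply, LinearMap.smul_apply, smul_eq_mul,
      h12, mul_zero, sub_zero, hβ₂]
    field_simp
    ring
  have hnn : B n n = -2 - β₁ * B δ x₁ - β₂ * B δ x₂ := by
    simp only [hn, map_sub, map_smul, LinearMap.sub_apply, LinearMap.smul_apply, smul_eq_mul,
      hδδ, h12, e21, e1δ, e2δ, hβ₁, hβ₂]
    field_simp
    ring
  have hquantn := hquant n hnκ hn1 hn2
  have h1' : (B δ x₁)^2 ≤ (ε * r)^2 := by
    rw [← sq_abs]
    exact pow_le_pow_left₀ (abs_nonneg _) h1.le 2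
  have h2' : (B δ x₂)^2 ≤ (ε * r)^2 := by
    rw [← sq_abs]
    exact pow_le_pow_left₀ (abs_nonneg _) h2.le 2
  have hb1 : β₁ * B δ x₁ = (B δ x₁)^2 * (1 / B x₁ x₁) := by rw [hβ₁]; ring
  have hb2 : β₂ * B δ x₂ = (B δ x₂)^2 * (1 / B x₂ x₂) := by rw [hβ₂]; ring
  have hA₁inv : (0:ℝ) < 1 / B x₁ x₁ := by positivity
  have hA₂inv : (0:ℝ) < 1 / B x₂ x₂ := by positivity
  have hsq1 : (B δ x₁)^2 * (1 / B x₁ x₁) ≤ (ε * r)^2 * (1 / B x₁ x₁) :=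
    mul_le_mul_of_nonneg_right h1' hA₁inv.le
  have hsq2 : (B δ x₂)^2 * (1 / B x₂ x₂) ≤ (ε * r)^2 * (1 / B x₂ x₂) :=
    mul_le_mul_of_nonneg_right h2' hA₂inv.le
  have hcn : C * ‖n‖^2 ≤ 2 + K * (ε^2 * r^2) := by
    rw [hnn] at hquantn
    have hKexp : (ε*r)^2*(1 / B x₁ x₁) + (ε*r)^2*(1 / B x₂ x₂) = K*(ε^2*r^2) := by
      rw [hK]; ring
    linarith [hquantn, hb1, hb2, hsq1, hsq2, hKexp]
  have hδeq : δ = n + β₁ • x₁ + β₂ • x₂ := by rw [hn]; abel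
  have hnormδ : r ≤ ‖n‖ + ε * r * M := by
    have htriangle : ‖δ‖ ≤ ‖n‖ + ‖β₁ • x₁‖ + ‖β₂ • x₂‖ := by
      rw [hδeq]; exact norm_add₃_le
    have habs1 : |β₁| ≤ ε * r / B x₁ x₁ := by
      rw [hβ₁, abs_div, abs_of_pos hx₁]
      exact (div_le_div_iff_of_pos_right hx₁).mpr h1.le
    have habs2 : |β₂| ≤ ε * r / B x₂ x₂ := by
      rw [hβ₂, abs_div, abs_of_pos hx₂]
      exact (div_le_div_iff_of_pos_right hx₂).mpr h2.le
    have hb1n : ‖β₁ • x₁‖ ≤ ε * r / B x₁ x₁ * ‖x₁‖ := by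
      rw [norm_smul, Real.norm_eq_abs]
      exact mul_le_mul_of_nonneg_right habs1 (norm_nonneg _)
    have hb2n : ‖β₂ • x₂‖ ≤ ε * r / B x₂ x₂ * ‖x₂‖ := by
      rw [norm_smul, Real.norm_eq_abs]
      exact mul_le_mul_of_nonneg_right habs2 (norm_nonneg _)
    have hMsum : ε * r / B x₁ x₁ * ‖x₁‖ + ε * r / B x₂ x₂ * ‖x₂‖ = ε * r * M := by
      rw [hM]; ring
    calc r = ‖δ‖ := hr
      _ ≤ ‖n‖ + ‖β₁ • x₁‖ + ‖β₂ • x₂‖ := htriangle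
      _ ≤ ‖n‖ + ε * r / B x₁ x₁ * ‖x₁‖ + ε * r / B x₂ x₂ * ‖x₂‖ := by linarith
      _ = ‖n‖ + ε * r * M := by rw [← hMsum]; ring
  have hε1 : ε ≤ 1 / (2 * (M + 1)) := hεdef ▸ min_le_left _ _
  have hε2 : ε ≤ Real.sqrt (C / (8 * (K + 1))) :=
    hεdef ▸ le_trans (min_le_right _ _) (min_le_left _ _)
  have hε3 : ε ≤ s / 4 := hεdef ▸ le_trans (min_le_right _ _) (min_le_right _ _)
  have hεM : ε * M ≤ 1 / 2 := by
    rw [le_div_iff₀ (by positivity : (0:ℝ) < 2 * (M + 1))] at hε1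
    linarith [hεpos]
  have hr2n : r ≤ 2 * ‖n‖ := by
    have := mul_le_mul_of_nonneg_right hεM hrnn
    linarith [hnormδ]
  have hε2' : ε ^ 2 ≤ C / (8 * (K + 1)) :=
    calc ε ^ 2 ≤ Real.sqrt (C / (8 * (K + 1))) ^ 2 := pow_le_pow_left₀ hεpos.le hε2 2
      _ = C / (8 * (K + 1)) := Real.sq_sqrt (by positivity)
  have hKe : K * ε ^ 2 ≤ C / 8 := by
    have ha : K * ε ^ 2 ≤ (K + 1) * ε ^ 2 := by linarith [sq_nonneg ε]
    have hb : (K + 1) * ε ^ 2 ≤ (K + 1) * (C / (8 * (K + 1))) :=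
      mul_le_mul_of_nonneg_left hε2' (by positivity)
    have hcd : (K + 1) * (C / (8 * (K + 1))) = C / 8 := by
      field_simp
    linarith
  have hr216 : r ^ 2 * C ≤ 16 := by
    have hnr : r ^ 2 ≤ 4 * ‖n‖ ^ 2 := by
      calc r ^ 2 ≤ (2 * ‖n‖) ^ 2 := pow_le_pow_left₀ hrnn hr2n 2
        _ = 4 * ‖n‖ ^ 2 := by ring
    have h4 : C * r ^ 2 ≤ 4 * (2 + K * (ε ^ 2 * r ^ 2)) := by
      have hmul := mul_le_mul_of_nonneg_left hnr hC.le
      linarith only [hcn, hmul]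
    have h5 : K * (ε ^ 2 * r ^ 2) ≤ C / 8 * r ^ 2 := by
      have hmul := mul_le_mul_of_nonneg_right hKe (sq_nonneg r)
      linarith only [hmul]
    linarith only [h4, h5, hC]
  rw [le_div_iff₀ hεpos]
  have hrsC : r ^ 2 * s ^ 2 = r ^ 2 * C := by rw [hssq]
  have hrs : r * s ≤ 4 := by
    linarith only [hr216, hrsC, sq_nonneg (r * s - 4)]
  have hre : r * ε ≤ r * (s / 4) := mul_le_mul_of_nonneg_left hε3 hrnn
  linarith only [hrs, hre]
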